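/- Hyperbolic-valued specialization of the bicomplex generating function: for all U, Z ∈ ℂ × ℂ, Σ_{m=0}^∞ Σ_{n=0}^∞ 𝐇_{m,n}(Z, Z*) · U^m · (U*)^n / (m! n!) = exp(U·Z + (U·Z)* − U·U*), and this value is a hyperbolic number, i.e. both of its idempotent components are real. -/

import Mathlib

open Complex

/-- The bicomplex Hermite polynomial of the first kind `𝐇_{m,n}(Z,W)`, computed in the
bicomplex algebra `ℂ × ℂ` (idempotent representation, componentwise operations). -/
noncomputable def hermiteBC (m n : ℕ) (Z W : ℂ × ℂ) : ℂ × ℂ :=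
  ∑ k ∈ Finset.range (min m n + 1),
    ((-1 : ℂ) ^ k * (k.factorial : ℂ) * (m.choose k : ℂ) * (n.choose k : ℂ)) •
      (Z ^ (m - k) * W ^ (n - k))

/-- The bicomplex exponential: the componentwise complex exponential on `ℂ × ℂ`. -/
noncomputable def bcExp (Z : ℂ × ℂ) : ℂ × ℂ := (Complex.exp Z.1, Complex.exp Z.2)

/-- Scalar (one-component) Hermite polynomial. -/
noncomputable def hermiteC (m n : ℕ) (z w : ℂ) : ℂ :=
  ∑ k ∈ Finset.range (min m n + 1),
    ((-1 : ℂ) ^ k * (k.factorial : ℂ) * (m.choose k : ℂ) * (n.choose k : ℂ)) *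
      (z ^ (m - k) * w ^ (n - k))

lemma hermiteBC_fst (m n : ℕ) (Z W : ℂ × ℂ) :
    (hermiteBC m n Z W).1 = hermiteC m n Z.1 W.1 := by
  simp [hermiteBC, hermiteC, Prod.fst_sum]

lemma hermiteBC_snd (m n : ℕ) (Z W : ℂ × ℂ) :
    (hermiteBC m n Z W).2 = hermiteC m n Z.2 W.2 := by
  simp [hermiteBC, hermiteC, Prod.snd_sum]

lemma summable_norm_exp_series (x : ℂ) :
    Summable (fun n : ℕ => ‖x ^ n / (n.factorial : ℂ)‖) := by
  have := Real.summable_pow_div_factorial ‖x‖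
  simpa [norm_div, norm_pow] using this

lemma hasSum_exp_series (x : ℂ) :
    HasSum (fun n : ℕ => x ^ n / (n.factorial : ℂ)) (Complex.exp x) := by
  rw [Complex.exp_eq_exp_ℂ]
  exact NormedSpace.expSeries_div_hasSum_exp x

set_option maxHeartbeats 1000000 in
/-- Key scalar generating-function identity. -/
lemma hermiteC_generating (u v z w : ℂ) :
    HasSum
      (fun p : ℕ × ℕ =>
        ((p.1.factorial : ℂ) * (p.2.factorial : ℂ))⁻¹ *
          (hermiteC p.1 p.2 z w * u ^ p.1 * v ^ p.2))
      (Complex.exp (u * z + v * w - u * v)) := by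
  set x₁ : ℂ := u * z with hx₁
  set x₂ : ℂ := v * w with hx₂
  set x₃ : ℂ := -(u * v) with hx₃
  have h1 := hasSum_exp_series x₁
  have h2 := hasSum_exp_series x₂
  have h3 := hasSum_exp_series x₃
  have s1 := summable_norm_exp_series x₁
  have s2 := summable_norm_exp_series x₂
  have s3 := summable_norm_exp_series x₃
  -- product of the three series over ℕ × (ℕ × ℕ)
  have h12 := h1.mul h2 (summable_mul_of_summable_norm
    (f := fun n : ℕ => x₁ ^ n / (n.factorial : ℂ))
    (g := fun n : ℕ => x₂ ^ n / (n.factorial : ℂ)) s1 s2)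
  have s12 := s1.mul_norm (f := fun n : ℕ => x₁ ^ n / (n.factorial : ℂ))
    (g := fun n : ℕ => x₂ ^ n / (n.factorial : ℂ)) s2
  have h123' := h3.mul h12 (summable_mul_of_summable_norm
    (f := fun n : ℕ => x₃ ^ n / (n.factorial : ℂ))
    (g := fun p : ℕ × ℕ =>
      (x₁ ^ p.1 / (p.1.factorial : ℂ)) * (x₂ ^ p.2 / (p.2.factorial : ℂ))) s3 s12)
  have h123 : HasSum (fun q : ℕ × ℕ × ℕ =>
      (x₃ ^ q.1 / (q.1.factorial : ℂ)) *
        ((x₁ ^ q.2.1 / (q.2.1.factorial : ℂ)) * (x₂ ^ q.2.2 / (q.2.2.factorial : ℂ))))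
      (Complex.exp x₃ * (Complex.exp x₁ * Complex.exp x₂)) := h123'
  -- reindex along ψ : (k, a, b) ↦ ((a + k, b + k), k)
  set F : (ℕ × ℕ) × ℕ → ℂ := fun x =>
    if x.2 ≤ min x.1.1 x.1.2 then
      ((-1 : ℂ) ^ x.2 * (x.2.factorial : ℂ) * (x.1.1.choose x.2 : ℂ) *
          (x.1.2.choose x.2 : ℂ)) * (z ^ (x.1.1 - x.2) * w ^ (x.1.2 - x.2)) *
        u ^ x.1.1 * v ^ x.1.2 / ((x.1.1.factorial : ℂ) * (x.1.2.factorial : ℂ))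
    else 0 with hF
  set ψ : ℕ × ℕ × ℕ → (ℕ × ℕ) × ℕ := fun q => ((q.2.1 + q.1, q.2.2 + q.1), q.1) with hψ
  have hψinj : Function.Injective ψ := by
    rintro ⟨k, a, b⟩ ⟨k', a', b'⟩ h
    simp only [hψ, Prod.mk.injEq] at h
    obtain ⟨⟨h1, h2⟩, h3⟩ := h
    subst h3
    simp only [Nat.add_right_cancel_iff] at h1 h2
    simp [h1, h2]
  have hFzero : ∀ x, x ∉ Set.range ψ → F x = 0 := by
    rintro ⟨⟨m, n⟩, k⟩ hx
    by_cases hk : k ≤ min m n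
    · exfalso
      refine hx ⟨(k, m - k, n - k), ?_⟩
      have h1 : m - k + k = m := by omega
      have h2 : n - k + k = n := by omega
      simp only [hψ]
      rw [h1, h2]
    · simp only [hF]
      exact if_neg hk
  have hcomp : ∀ q : ℕ × ℕ × ℕ, F (ψ q) =
      (x₃ ^ q.1 / (q.1.factorial : ℂ)) *
        ((x₁ ^ q.2.1 / (q.2.1.factorial : ℂ)) * (x₂ ^ q.2.2 / (q.2.2.factorial : ℂ))) := by
    rintro ⟨k, a, b⟩
    have hk : k ≤ min (a + k) (b + k) := by omega
    simp only [hF, hψ, hk, if_pos]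
    have ha : a + k - k = a := by omega
    have hb : b + k - k = b := by omega
    rw [ha, hb]
    have hfac1 : ((a + k).factorial : ℂ) = ((a + k).choose k : ℂ) * (a.factorial : ℂ) * (k.factorial : ℂ) := by
      have := Nat.add_choose_mul_factorial_mul_factorial a k
      push_cast [← this]
      ring
    have hfac2 : ((b + k).factorial : ℂ) = ((b + k).choose k : ℂ) * (b.factorial : ℂ) * (k.factorial : ℂ) := by
      have := Nat.add_choose_mul_factorial_mul_factorial b k
      push_cast [← this]
      ring
    have hane : (a.factorial : ℂ) ≠ 0 := Nat.cast_ne_zero.mpr a.factorial_ne_zero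
    have hbne : (b.factorial : ℂ) ≠ 0 := Nat.cast_ne_zero.mpr b.factorial_ne_zero
    have hkne : (k.factorial : ℂ) ≠ 0 := Nat.cast_ne_zero.mpr k.factorial_ne_zero
    have hcane : ((a + k).choose k : ℂ) ≠ 0 := Nat.cast_ne_zero.mpr (Nat.choose_pos (by omega)).ne'
    have hcbne : ((b + k).choose k : ℂ) ≠ 0 := Nat.cast_ne_zero.mpr (Nat.choose_pos (by omega)).ne'
    rw [hx₁, hx₂, hx₃, hfac1, hfac2]
    field_simp
    ring
  have hF_sum : HasSum F (Complex.exp x₃ * (Complex.exp x₁ * Complex.exp x₂)) := by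
    rw [← hψinj.hasSum_iff hFzero]
    have heq : (F ∘ ψ) = fun q : ℕ × ℕ × ℕ =>
        (x₃ ^ q.1 / (q.1.factorial : ℂ)) *
          ((x₁ ^ q.2.1 / (q.2.1.factorial : ℂ)) * (x₂ ^ q.2.2 / (q.2.2.factorial : ℂ))) :=
      funext hcomp
    rw [heq]
    exact h123
  have hfiber : ∀ p : ℕ × ℕ, HasSum (fun k => F (p, k))
      (((p.1.factorial : ℂ) * (p.2.factorial : ℂ))⁻¹ *
        (hermiteC p.1 p.2 z w * u ^ p.1 * v ^ p.2)) := by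
    rintro ⟨m, n⟩
    have hvanish : ∀ k ∉ Finset.range (min m n + 1), F ((m, n), k) = 0 := by
      intro k hk
      simp only [Finset.mem_range] at hk
      have hkk : ¬ k ≤ min m n := by omega
      simp only [hF]
      exact if_neg hkk
    have := hasSum_sum_of_ne_finset_zero (L := SummationFilter.unconditional ℕ) hvanish
    convert this using 1
    rw [hermiteC, Finset.sum_mul, Finset.sum_mul, Finset.mul_sum]
    refine Finset.sum_congr rfl fun k hk => ?_
    simp only [Finset.mem_range] at hk
    have hkle : k ≤ min m n := by omega
    simp only [hF, hkle, if_pos]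
    rw [div_eq_mul_inv]
    ring
  have hexp : Complex.exp x₃ * (Complex.exp x₁ * Complex.exp x₂)
      = Complex.exp (u * z + v * w - u * v) := by
    rw [hx₁, hx₂, hx₃, ← Complex.exp_add, ← Complex.exp_add]
    congr 1
    ring
  exact hexp ▸ hF_sum.prod_fiberwise hfiber

/-- **Hyperbolic-valued specialization of the bicomplex generating function:**
`∑_{m,n} 𝐇_{m,n}(Z,Z*) U^m (U*)^n/(m! n!) = exp(UZ + (UZ)* - U U*)`, and this value is a
hyperbolic number: both idempotent components are real. -/
theorem hermiteBC_generating_star_hyperbolic (U Z : ℂ × ℂ) :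
    HasSum
      (fun p : ℕ × ℕ =>
        ((p.1.factorial : ℂ) * (p.2.factorial : ℂ))⁻¹ •
          (hermiteBC p.1 p.2 Z (star Z) * U ^ p.1 * (star U) ^ p.2))
      (bcExp (U * Z + star (U * Z) - U * star U)) ∧
    (bcExp (U * Z + star (U * Z) - U * star U)).1.im = 0 ∧
    (bcExp (U * Z + star (U * Z) - U * star U)).2.im = 0 := by
  have key1 := hermiteC_generating U.1 (starRingEnd ℂ U.1) Z.1 (starRingEnd ℂ Z.1)
  have key2 := hermiteC_generating U.2 (starRingEnd ℂ U.2) Z.2 (starRingEnd ℂ Z.2)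
  have hexp1 : (U * Z + star (U * Z) - U * star U).1
      = U.1 * Z.1 + starRingEnd ℂ U.1 * starRingEnd ℂ Z.1 - U.1 * starRingEnd ℂ U.1 := by
    simp [Prod.fst_mul, Prod.fst_add, Prod.fst_sub]
  have hexp2 : (U * Z + star (U * Z) - U * star U).2
      = U.2 * Z.2 + starRingEnd ℂ U.2 * starRingEnd ℂ Z.2 - U.2 * starRingEnd ℂ U.2 := by
    simp [Prod.snd_mul, Prod.snd_add, Prod.snd_sub]
  refine ⟨?_, ?_, ?_⟩
  · have h := key1.prodMk key2
    have heq : (fun p : ℕ × ℕ =>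
        ((p.1.factorial : ℂ) * (p.2.factorial : ℂ))⁻¹ •
          (hermiteBC p.1 p.2 Z (star Z) * U ^ p.1 * (star U) ^ p.2))
        = fun p : ℕ × ℕ =>
        (((p.1.factorial : ℂ) * (p.2.factorial : ℂ))⁻¹ *
            (hermiteC p.1 p.2 Z.1 (starRingEnd ℂ Z.1) * U.1 ^ p.1 *
              (starRingEnd ℂ U.1) ^ p.2),
          ((p.1.factorial : ℂ) * (p.2.factorial : ℂ))⁻¹ *
            (hermiteC p.1 p.2 Z.2 (starRingEnd ℂ Z.2) * U.2 ^ p.1 *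
              (starRingEnd ℂ U.2) ^ p.2)) := by
      funext p
      refine Prod.ext ?_ ?_
      · simp [Prod.fst_mul, Prod.pow_fst, hermiteBC_fst, Prod.smul_fst, smul_eq_mul]
      · simp [Prod.snd_mul, Prod.pow_snd, hermiteBC_snd, Prod.smul_snd, smul_eq_mul]
    rw [heq]
    have hbc : (bcExp (U * Z + star (U * Z) - U * star U))
        = (Complex.exp (U.1 * Z.1 + starRingEnd ℂ U.1 * starRingEnd ℂ Z.1
              - U.1 * starRingEnd ℂ U.1),
           Complex.exp (U.2 * Z.2 + starRingEnd ℂ U.2 * starRingEnd ℂ Z.2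
              - U.2 * starRingEnd ℂ U.2)) := by
      rw [bcExp, hexp1, hexp2]
    rw [hbc]
    exact h
  · rw [bcExp]
    simp only [Complex.exp_im, hexp1]
    have him : (U.1 * Z.1 + starRingEnd ℂ U.1 * starRingEnd ℂ Z.1
        - U.1 * starRingEnd ℂ U.1).im = 0 := by
      rw [← map_mul]
      simp [Complex.sub_im, Complex.add_im, Complex.conj_im, Complex.mul_im, Complex.conj_re]
      ring
    rw [him, Real.sin_zero, mul_zero]
  · rw [bcExp]
    simp only [Complex.exp_im, hexp2]
    have him : (U.2 * Z.2 + starRingEnd ℂ U.2 * starRingEnd ℂ Z.2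
        - U.2 * starRingEnd ℂ U.2).im = 0 := by
      rw [← map_mul]
      simp [Complex.sub_im, Complex.add_im, Complex.conj_im, Complex.mul_im, Complex.conj_re]
      ring
    rw [him, Real.sin_zero, mul_zero]
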